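/- Let F₁, F₂, … be random concave functions from ℝ_{≥0} to ℝ converging pointwise in probability to a deterministic function F. Then for every x > 0 at which F is differentiable, both the left derivatives ∂₋Fₙ(x) and the right derivatives ∂₊Fₙ(x) converge to F'(x) in probability. -/

import Mathlib

open Set Filter MeasureTheory Topology

lemma concave_hasDeriv_left {f : ℝ → ℝ} (hf : ConcaveOn ℝ (Set.Ici 0) f) {x : ℝ} (hx : 0 < x) :
    HasDerivWithinAt f (sInf (slope f x '' Ioo 0 x)) (Iio x) x := by
  have anti : AntitoneOn (slope f x) (Ici 0 \ {x}) := hf.slope_anti hx.le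
  have hsub : Ioo 0 x ⊆ Ici 0 \ {x} := fun y hy => ⟨hy.1.le, hy.2.ne⟩
  have hxb : (x + 1) ∈ Ici 0 \ {x} := ⟨by simp; linarith, by simp⟩
  have hbdd : BddBelow (slope f x '' Ioo 0 x) := by
    refine ⟨slope f x (x + 1), ?_⟩
    rintro _ ⟨y, hy, rfl⟩
    exact anti (hsub hy) hxb (by linarith [hy.2])
  have hne : (Ioo (0:ℝ) x).Nonempty := nonempty_Ioo.2 hx
  have ht := (anti.mono hsub).tendsto_nhdsWithin_Ioo_left hne hbdd
  exact (hasDerivWithinAt_iff_tendsto_slope' notMem_Iio_self).mpr ht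

lemma concave_hasDeriv_right {f : ℝ → ℝ} (hf : ConcaveOn ℝ (Set.Ici 0) f) {x : ℝ} (hx : 0 < x) :
    HasDerivWithinAt f (sSup (slope f x '' Ioi x)) (Ioi x) x := by
  have anti : AntitoneOn (slope f x) (Ici 0 \ {x}) := hf.slope_anti hx.le
  have hsub : Ioi x ⊆ Ici 0 \ {x} := fun y hy => ⟨(hx.trans hy).le, hy.ne'⟩
  have hxa : x / 2 ∈ Ici 0 \ {x} := ⟨by simp; linarith, by simp; linarith⟩
  have hbdd : BddAbove (slope f x '' Ioi x) := by
    refine ⟨slope f x (x / 2), ?_⟩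
    rintro _ ⟨y, hy, rfl⟩
    exact anti hxa (hsub hy) (by simp at hy ⊢; linarith)
  have ht := (anti.mono hsub).tendsto_nhdsGT hbdd
  exact (hasDerivWithinAt_iff_tendsto_slope' notMem_Ioi_self).mpr ht

/-- Both one-sided derivatives of a concave function lie between adjacent slopes. -/
lemma concave_deriv_bounds {f : ℝ → ℝ} (hf : ConcaveOn ℝ (Set.Ici 0) f) {x a b : ℝ}
    (ha : a ∈ Ioo 0 x) (hb : x < b) :
    slope f x b ≤ derivWithin f (Iio x) x ∧ derivWithin f (Iio x) x ≤ slope f x a ∧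
    slope f x b ≤ derivWithin f (Ioi x) x ∧ derivWithin f (Ioi x) x ≤ slope f x a := by
  have hx : 0 < x := ha.1.trans ha.2
  have anti : AntitoneOn (slope f x) (Ici 0 \ {x}) := hf.slope_anti hx.le
  have hsubL : Ioo 0 x ⊆ Ici 0 \ {x} := fun y hy => ⟨hy.1.le, hy.2.ne⟩
  have hsubR : Ioi x ⊆ Ici 0 \ {x} := fun y hy => ⟨(hx.trans hy).le, hy.ne'⟩
  have hbddL : BddBelow (slope f x '' Ioo 0 x) :=
    ⟨slope f x b, by rintro _ ⟨y, hy, rfl⟩; exact anti (hsubL hy) (hsubR hb) (by linarith [hy.2])⟩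
  have hbddR : BddAbove (slope f x '' Ioi x) :=
    ⟨slope f x a, by rintro _ ⟨y, hy, rfl⟩; exact anti (hsubL ha) (hsubR hy) (le_of_lt (ha.2.trans hy))⟩
  have hdL := (concave_hasDeriv_left hf hx).derivWithin (uniqueDiffWithinAt_Iio x)
  have hdR := (concave_hasDeriv_right hf hx).derivWithin (uniqueDiffWithinAt_Ioi x)
  rw [hdL, hdR]
  refine ⟨?_, ?_, ?_, ?_⟩
  · refine le_csInf ((nonempty_Ioo.2 hx).image _) ?_
    rintro _ ⟨y, hy, rfl⟩
    exact anti (hsubL hy) (hsubR hb) (by linarith [hy.2])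
  · exact csInf_le hbddL ⟨a, ha, rfl⟩
  · exact le_csSup hbddR ⟨b, hb, rfl⟩
  · refine csSup_le ((nonempty_Ioi).image _) ?_
    rintro _ ⟨y, hy, rfl⟩
    exact anti (hsubL ha) (hsubR hy) (le_of_lt (ha.2.trans hy))

/-- If random concave functions on `ℝ_{≥0}` converge pointwise in probability to a
deterministic function `F`, then at any `x > 0` where `F` is differentiable (with
derivative `L`), both the left and the right derivatives of `Fₙ` at `x` converge to
`L` in probability. -/
theorem stmt11 {α : Type*} [MeasurableSpace α] (μ : Measure α)
    [IsProbabilityMeasure μ] (F : ℕ → α → ℝ → ℝ) (Flim : ℝ → ℝ)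
    (hconc : ∀ n ω, ConcaveOn ℝ (Set.Ici 0) (F n ω))
    (hprob : ∀ x ∈ Set.Ici (0 : ℝ), ∀ ε > (0 : ℝ),
      Tendsto (fun n => μ {ω | ε ≤ |F n ω x - Flim x|}) atTop (nhds 0))
    (x : ℝ) (hx : 0 < x) (L : ℝ) (hdiff : HasDerivWithinAt Flim L (Set.Ici 0) x) :
    (∀ ε > (0 : ℝ),
      Tendsto (fun n => μ {ω | ε ≤ |derivWithin (F n ω) (Set.Iio x) x - L|})
        atTop (nhds 0)) ∧
    (∀ ε > (0 : ℝ),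
      Tendsto (fun n => μ {ω | ε ≤ |derivWithin (F n ω) (Set.Ioi x) x - L|})
        atTop (nhds 0)) := by
  have key : ∀ ε > (0 : ℝ),
      (Tendsto (fun n => μ {ω | ε ≤ |derivWithin (F n ω) (Set.Iio x) x - L|}) atTop (nhds 0)) ∧
      (Tendsto (fun n => μ {ω | ε ≤ |derivWithin (F n ω) (Set.Ioi x) x - L|}) atTop (nhds 0)) := by
    intro ε hε
    have hε4 : (0:ℝ) < ε/4 := by linarith
    have hslope : Tendsto (slope Flim x) (𝓝[Ici 0 \ {x}] x) (𝓝 L) :=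
      hasDerivWithinAt_iff_tendsto_slope.mp hdiff
    have hev : ∀ᶠ y in 𝓝[Ici 0 \ {x}] x, |slope Flim x y - L| < ε/4 := by
      have := Metric.tendsto_nhds.mp hslope (ε/4) hε4
      simpa [Real.dist_eq] using this
    -- choose a < x
    obtain ⟨a, ha, haI⟩ : ∃ a, |slope Flim x a - L| < ε/4 ∧ a ∈ Ioo 0 x := by
      have h1 : 𝓝[Ioo 0 x] x ≤ 𝓝[Ici 0 \ {x}] x :=
        nhdsWithin_mono _ (fun y hy => ⟨hy.1.le, hy.2.ne⟩)
      have h2 : (𝓝[Ioo (0:ℝ) x] x).NeBot := by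
        rw [nhdsWithin_Ioo_eq_nhdsLT hx]; infer_instance
      exact ((hev.filter_mono h1).and self_mem_nhdsWithin).exists
    -- choose b > x
    obtain ⟨b, hbe, hb⟩ : ∃ b, |slope Flim x b - L| < ε/4 ∧ b ∈ Ioi x := by
      have h1 : 𝓝[Ioi x] x ≤ 𝓝[Ici 0 \ {x}] x :=
        nhdsWithin_mono _ (fun y hy => ⟨(hx.trans hy).le, hy.ne'⟩)
      exact ((hev.filter_mono h1).and self_mem_nhdsWithin).exists
    have hxa : (0:ℝ) < x - a := by have := haI.2; linarith
    have hbx : (0:ℝ) < b - x := by have : x < b := hb; linarith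
    set η : ℝ := ε/8 * min (x - a) (b - x) with hηdef
    have hη : 0 < η := by
      apply mul_pos (by linarith)
      exact lt_min hxa hbx
    have hmina : η ≤ ε/8 * (x - a) :=
      mul_le_mul_of_nonneg_left (min_le_left _ _) (by linarith)
    have hminb : η ≤ ε/8 * (b - x) :=
      mul_le_mul_of_nonneg_left (min_le_right _ _) (by linarith)
    -- pointwise key estimate
    have hkey : ∀ n ω, |F n ω a - Flim a| < η → |F n ω x - Flim x| < η →
        |F n ω b - Flim b| < η →
        |derivWithin (F n ω) (Set.Iio x) x - L| < ε ∧
        |derivWithin (F n ω) (Set.Ioi x) x - L| < ε := by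
      intro n ω hA hX hB
      set f := F n ω with hf
      obtain ⟨h1, h2, h3, h4⟩ := concave_deriv_bounds (hconc n ω) haI hb
      have hsa : |slope f x a - slope Flim x a| ≤ ε/4 := by
        have heq : slope f x a - slope Flim x a
            = ((f a - Flim a) - (f x - Flim x)) / (a - x) := by
          rw [slope_def_field, slope_def_field]; ring
        rw [heq, abs_div, abs_of_neg (by linarith : a - x < 0)]
        rw [div_le_iff₀ (by linarith : (0:ℝ) < -(a - x))]
        have habs : |(f a - Flim a) - (f x - Flim x)| ≤ |f a - Flim a| + |f x - Flim x| :=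
          abs_sub _ _
        nlinarith
      have hsb : |slope f x b - slope Flim x b| ≤ ε/4 := by
        have heq : slope f x b - slope Flim x b
            = ((f b - Flim b) - (f x - Flim x)) / (b - x) := by
          rw [slope_def_field, slope_def_field]; ring
        rw [heq, abs_div, abs_of_pos (by linarith : (0:ℝ) < b - x)]
        rw [div_le_iff₀ hbx]
        have habs : |(f b - Flim b) - (f x - Flim x)| ≤ |f b - Flim b| + |f x - Flim x| :=
          abs_sub _ _
        nlinarith
      have e1 := abs_lt.mp ha
      have e2 := abs_lt.mp hbe
      have e3 := abs_le.mp hsa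
      have e4 := abs_le.mp hsb
      constructor
      · rw [abs_lt]; exact ⟨by linarith, by linarith⟩
      · rw [abs_lt]; exact ⟨by linarith, by linarith⟩
    -- measure bound
    have main : ∀ (d : ℕ → α → ℝ),
        (∀ n ω, |F n ω a - Flim a| < η → |F n ω x - Flim x| < η →
          |F n ω b - Flim b| < η → |d n ω - L| < ε) →
        Tendsto (fun n => μ {ω | ε ≤ |d n ω - L|}) atTop (nhds 0) := by
      intro d hd
      have hincl : ∀ n, {ω | ε ≤ |d n ω - L|} ⊆
          {ω | η ≤ |F n ω a - Flim a|} ∪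
          ({ω | η ≤ |F n ω x - Flim x|} ∪ {ω | η ≤ |F n ω b - Flim b|}) := by
        intro n ω hω
        by_contra hcon
        simp only [mem_union, mem_setOf_eq, not_or, not_le] at hcon
        exact absurd (hd n ω hcon.1 hcon.2.1 hcon.2.2) (not_lt.mpr hω)
      have hA := hprob a haI.1.le η hη
      have hX := hprob x hx.le η hη
      have hB := hprob b (by have : x < b := hb; linarith : (0:ℝ) ≤ b) η hη
      have hsum : Tendsto (fun n => μ {ω | η ≤ |F n ω a - Flim a|} +
          (μ {ω | η ≤ |F n ω x - Flim x|} + μ {ω | η ≤ |F n ω b - Flim b|}))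
          atTop (nhds 0) := by
        simpa using hA.add (hX.add hB)
      refine tendsto_of_tendsto_of_tendsto_of_le_of_le tendsto_const_nhds hsum
        (fun n => zero_le) (fun n => ?_)
      exact (measure_mono (hincl n)).trans ((measure_union_le _ _).trans
        (add_le_add le_rfl (measure_union_le _ _)))
    exact ⟨main _ (fun n ω h1 h2 h3 => (hkey n ω h1 h2 h3).1),
           main _ (fun n ω h1 h2 h3 => (hkey n ω h1 h2 h3).2)⟩
  exact ⟨fun ε hε => (key ε hε).1, fun ε hε => (key ε hε).2⟩
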